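/- Let F be a finite field of order m, M = (m^N − 1)/(m − 1), and a_1, …, a_M ∈ F^N nonzero pairwise linearly independent vectors (one representative from each one-dimensional subspace). Then V_{F^N} is the orthogonal direct sum of the subspaces V_{F^N}^{a_1}, …, V_{F^N}^{a_M}; in particular, Σ_i dim V_{F^N}^{a_i} = m^N − 1 = dim V_{F^N}. -/

import Mathlib

open Finset

/-- A strictly positive probability mass function on a finite alphabet. -/
def IsPPMF {A : Type*} [Fintype A] (p : A → ℝ) : Prop :=
  (∀ x, 0 < p x) ∧ ∑ x, p x = 1

/-- Addition of PMFs: normalized pointwise product. -/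
noncomputable def padd {A : Type*} [Fintype A] (p q : A → ℝ) : A → ℝ :=
  fun x => p x * q x / ∑ y, p y * q y

/-- Scalar multiplication of PMFs: normalized pointwise real power. -/
noncomputable def psmul {A : Type*} [Fintype A] (α : ℝ) (p : A → ℝ) : A → ℝ :=
  fun x => p x ^ α / ∑ y, p y ^ α

/-- The uniform PMF, the zero vector of the PMF vector space. -/
noncomputable def unif (A : Type*) [Fintype A] : A → ℝ :=
  fun _ => (Fintype.card A : ℝ)⁻¹

/-- The isometric map L from PMFs to ℝ^|A|. -/
noncomputable def Lmap {A : Type*} [Fintype A] (p : A → ℝ) : A → ℝ :=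
  fun x => Real.log (p x ^ (Fintype.card A) / ∏ y, p y)

/-- The dot product `a·x = Σ_k a_k x_k` over a field `F`. -/
def adot {F : Type*} [Field F] {N : ℕ} (a x : Fin N → F) : F :=
  ∑ k, a k * x k

/-- The soft parity check interaction with coefficient vector `a` and
underlying PMF `q`: `p(x) = |F|^{-(N-1)} q(a·x)`. -/
noncomputable def spci {F : Type*} [Field F] [Fintype F] {N : ℕ}
    (a : Fin N → F) (q : F → ℝ) : (Fin N → F) → ℝ :=
  fun x => ((Fintype.card F : ℝ) ^ (N - 1))⁻¹ * q (adot a x)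

/-- The `i`-th one-dimensional marginal of a joint PMF `p` on `F^N`. -/
noncomputable def marginal {F : Type*} [Field F] [Fintype F] [DecidableEq F] {N : ℕ}
    (p : (Fin N → F) → ℝ) (i : Fin N) : F → ℝ :=
  fun t => ∑ x : Fin N → F, if x i = t then p x else 0

/-- The coordinate-sum functional on ℝ^A, as a linear map. -/
def sumLM (A : Type*) [Fintype A] : (A → ℝ) →ₗ[ℝ] ℝ where
  toFun v := ∑ i, v i
  map_add' := by intro u v; simp [Finset.sum_add_distrib]
  map_smul' := by intro c v; simp [Finset.mul_sum]



section
open Function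
set_option linter.unusedSectionVars false

section fibers
variable {V W : Type*} [AddCommGroup V] [AddCommGroup W] [Fintype V] [Fintype W] [DecidableEq W]

lemma fiber_card_eq (ℓ : V →+ W) {w w' : W} (hw : ∃ x, ℓ x = w) (hw' : ∃ x, ℓ x = w') :
    (univ.filter fun x => ℓ x = w).card = (univ.filter fun x => ℓ x = w').card := by
  obtain ⟨x₀, hx₀⟩ := hw
  obtain ⟨x₁, hx₁⟩ := hw'
  apply Finset.card_bij (fun x _ => x + (x₁ - x₀))
  · intro x hx
    simp only [mem_filter, mem_univ, true_and] at hx ⊢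
    rw [map_add, map_sub, hx, hx₀, hx₁]
    abel
  · intro x _ y _ h
    exact add_right_cancel h
  · intro y hy
    refine ⟨y - (x₁ - x₀), ?_, by abel⟩
    simp only [mem_filter, mem_univ, true_and] at hy ⊢
    rw [map_sub, map_sub, hy, hx₀, hx₁]
    abel

lemma fiber_card_mul (ℓ : V →+ W) (hs : Surjective ℓ) (w : W) :
    (univ.filter fun x => ℓ x = w).card * Fintype.card W = Fintype.card V := by
  have h := Finset.card_eq_sum_card_fiberwise (s := (univ : Finset V))
    (t := (univ : Finset W)) (f := ℓ) (fun x _ => mem_univ _)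
  rw [card_univ] at h
  rw [h, ← Finset.card_univ (α := W), Finset.sum_congr rfl
    (fun w' _ => fiber_card_eq ℓ (hs w') (hs w)), Finset.sum_const, smul_eq_mul, mul_comm]

lemma sum_comp_fiber (ℓ : V →+ W) (hs : Surjective ℓ) (f : W → ℝ) :
    ∑ x, f (ℓ x) = ((univ.filter fun x => ℓ x = (0 : W)).card : ℝ) * ∑ w, f w := by
  rw [← Finset.sum_fiberwise' (univ : Finset V) ℓ f, Finset.mul_sum]
  refine Finset.sum_congr rfl fun w _ => ?_
  rw [Finset.sum_const, nsmul_eq_mul, fiber_card_eq ℓ (hs w) (hs 0)]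

end fibers
section adot
variable {F : Type*} [Field F] {N : ℕ}

lemma adot_add_right (a x y : Fin N → F) : adot a (x + y) = adot a x + adot a y := by
  simp [adot, mul_add, Finset.sum_add_distrib]

lemma adot_sub_right (a x y : Fin N → F) : adot a (x - y) = adot a x - adot a y := by
  simp [adot, mul_sub, Finset.sum_sub_distrib]

lemma adot_smul_right (a x : Fin N → F) (c : F) : adot a (c • x) = c * adot a x := by
  simp only [adot, Pi.smul_apply, smul_eq_mul, Finset.mul_sum]
  exact Finset.sum_congr rfl fun i _ => by ring

lemma adot_smul_left (a x : Fin N → F) (c : F) : adot (c • a) x = c * adot a x := by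
  simp only [adot, Pi.smul_apply, smul_eq_mul, Finset.mul_sum]
  exact Finset.sum_congr rfl fun i _ => by ring

lemma adot_zero_left (x : Fin N → F) : adot 0 x = 0 := by simp [adot]

lemma adot_single (a : Fin N → F) (k : Fin N) (c : F) :
    adot a (Pi.single k c) = a k * c := by
  classical
  simp [adot, Pi.single_apply, mul_ite, Finset.sum_ite_eq']

/-- `x ↦ adot a x` as an `AddMonoidHom`. -/
def adotL (a : Fin N → F) : (Fin N → F) →+ F where
  toFun x := adot a x
  map_zero' := by simp [adot]
  map_add' := adot_add_right a

/-- `v ↦ adot v y` as an `AddMonoidHom`. -/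
def adotR (y : Fin N → F) : (Fin N → F) →+ F where
  toFun v := adot v y
  map_zero' := adot_zero_left y
  map_add' := by intro u v; simp [adot, add_mul, Finset.sum_add_distrib]

/-- joint map `x ↦ (adot a x, adot b x)`. -/
def adotP (a b : Fin N → F) : (Fin N → F) →+ F × F where
  toFun x := (adot a x, adot b x)
  map_zero' := by simp [adot]
  map_add' := by intro u v; simp [adot_add_right, Prod.ext_iff]

lemma adotL_surj {a : Fin N → F} (ha : a ≠ 0) : Surjective (adotL a) := by
  obtain ⟨k, hk⟩ := Function.ne_iff.1 ha
  intro t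
  exact ⟨Pi.single k ((a k)⁻¹ * t), by
    simp [adotL, adot_single, ← mul_assoc, mul_inv_cancel₀ hk]⟩

lemma adotR_surj {y : Fin N → F} (hy : y ≠ 0) : Surjective (adotR y) := by
  obtain ⟨k, hk⟩ := Function.ne_iff.1 hy
  intro t
  refine ⟨Pi.single k (t * (y k)⁻¹), ?_⟩
  classical
  simp [adotR, adot, Pi.single_apply, ite_mul, Finset.sum_ite_eq',
    mul_assoc, inv_mul_cancel₀ hk]

/-- dual pair construction: if `a, b` are nonzero and not proportional, there is `x`
with `adot a x = 1` and `adot b x = 0`. -/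
lemma exists_dual (a b : Fin N → F) (ha : ∀ α : F, a ≠ α • b) (hb : b ≠ 0) :
    ∃ x, adot a x = 1 ∧ adot b x = 0 := by
  obtain ⟨k, hk⟩ := Function.ne_iff.1 hb
  simp only [Pi.zero_apply] at hk
  set a' : Fin N → F := a - (a k * (b k)⁻¹) • b with ha'
  have ha'0 : a' ≠ 0 := by
    intro h
    exact ha (a k * (b k)⁻¹) (by rwa [sub_eq_zero] at h)
  obtain ⟨j, hj⟩ := Function.ne_iff.1 ha'0
  simp only [Pi.zero_apply] at hj
  refine ⟨(a' j)⁻¹ • ((Pi.single j 1 : Fin N → F) - (b j * (b k)⁻¹) • (Pi.single k 1 : Fin N → F)), ?_, ?_⟩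
  · rw [adot_smul_right, adot_sub_right, adot_smul_right, adot_single, adot_single]
    have : a j - b j * (b k)⁻¹ * (a k * 1) = a' j := by
      simp only [ha', Pi.sub_apply, Pi.smul_apply, smul_eq_mul]
      ring
    rw [mul_one, this]
    exact inv_mul_cancel₀ hj
  · rw [adot_smul_right, adot_sub_right, adot_smul_right, adot_single, adot_single]
    rw [mul_one, mul_one, mul_assoc, inv_mul_cancel₀ hk, mul_one, sub_self, mul_zero]

lemma adotP_surj {a b : Fin N → F} (ha0 : a ≠ 0) (hb0 : b ≠ 0)
    (hab : ∀ α : F, a ≠ α • b) (hba : ∀ α : F, b ≠ α • a) :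
    Surjective (adotP a b) := by
  obtain ⟨x₁, hx₁a, hx₁b⟩ := exists_dual a b hab hb0
  obtain ⟨x₂, hx₂b, hx₂a⟩ := exists_dual b a hba ha0
  rintro ⟨u, v⟩
  refine ⟨u • x₁ + v • x₂, ?_⟩
  simp [adotP, adot_add_right, adot_smul_right, hx₁a, hx₁b, hx₂a, hx₂b, Prod.ext_iff]

end adot
section lmap
variable {A : Type*} [Fintype A] [Nonempty A]

lemma Lmap_apply {q : A → ℝ} (hq : ∀ x, 0 < q x) (x : A) :
    Lmap q x = (Fintype.card A : ℝ) * Real.log (q x) - ∑ y, Real.log (q y) := by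
  rw [Lmap, Real.log_div (pow_ne_zero _ (hq x).ne') (Finset.prod_ne_zero_iff.2
    fun y _ => (hq y).ne'), Real.log_pow, Real.log_prod fun y _ => (hq y).ne']

lemma sum_Lmap {q : A → ℝ} (hq : ∀ x, 0 < q x) : ∑ x, Lmap q x = 0 := by
  simp only [Lmap_apply hq, Finset.sum_sub_distrib, ← Finset.mul_sum, Finset.sum_const,
    nsmul_eq_mul, Finset.card_univ]
  ring

lemma exists_ppmf (v : A → ℝ) (hv : ∑ x, v x = 0) :
    ∃ q : A → ℝ, IsPPMF q ∧ Lmap q = v := by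
  have hn0 : (0:ℝ) < (Fintype.card A : ℝ) := by exact_mod_cast Fintype.card_pos
  set n : ℝ := (Fintype.card A : ℝ) with hn
  set Z : ℝ := ∑ s, Real.exp (v s / n) with hZ
  have hZ0 : 0 < Z := Finset.sum_pos (fun s _ => Real.exp_pos _) univ_nonempty
  refine ⟨fun t => Real.exp (v t / n) / Z, ⟨fun t => div_pos (Real.exp_pos _) hZ0, ?_⟩, ?_⟩
  · rw [← Finset.sum_div, ← hZ, div_self hZ0.ne']
  · funext t
    have hq : ∀ x : A, 0 < Real.exp (v x / n) / Z := fun x => div_pos (Real.exp_pos _) hZ0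
    rw [Lmap_apply hq]
    have hlog : ∀ x : A, Real.log (Real.exp (v x / n) / Z) = v x / n - Real.log Z := by
      intro x; rw [Real.log_div (Real.exp_ne_zero _) hZ0.ne', Real.log_exp]
    simp only [hlog, Finset.sum_sub_distrib, ← Finset.sum_div, hv, Finset.sum_const,
      Finset.card_univ, nsmul_eq_mul, ← hn, zero_div]
    have hn' : n ≠ 0 := hn0.ne'
    field_simp
    ring

end lmap

section spci
variable {F : Type*} [Field F] [Fintype F] [DecidableEq F] {N : ℕ}

lemma card_funF : Fintype.card (Fin N → F) = Fintype.card F ^ N := by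
  simp [Fintype.card_fun]

/-- fiber count for a nonzero functional `adot a ·`. -/
lemma card_fiber_adotL {a : Fin N → F} (ha : a ≠ 0) (t : F) :
    ((univ : Finset (Fin N → F)).filter fun x => adot a x = t).card
      = Fintype.card F ^ (N - 1) := by
  classical
  have h := fiber_card_mul (adotL a) (adotL_surj ha) t
  rw [card_funF] at h
  obtain ⟨k, -⟩ := Function.ne_iff.1 ha
  have hN : N - 1 + 1 = N := Nat.succ_pred_eq_of_pos k.pos
  have hm : 0 < Fintype.card F := Fintype.card_pos
  have : Fintype.card F ^ N = Fintype.card F ^ (N - 1) * Fintype.card F := by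
    rw [← pow_succ, hN]
  rw [this] at h
  have := Nat.eq_of_mul_eq_mul_right hm h
  exact this

lemma sum_comp_adot {a : Fin N → F} (ha : a ≠ 0) (f : F → ℝ) :
    ∑ x : Fin N → F, f (adot a x) = (Fintype.card F : ℝ) ^ (N - 1) * ∑ t, f t := by
  classical
  have h := sum_comp_fiber (adotL a) (adotL_surj ha) f
  have hc : ((univ.filter fun x => adotL a x = (0:F)).card) = Fintype.card F ^ (N - 1) :=
    card_fiber_adotL ha 0
  rw [hc] at h
  simp only [adotL, AddMonoidHom.coe_mk, ZeroHom.coe_mk] at h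
  rw [h]
  push_cast
  ring

lemma Lmap_spci {a : Fin N → F} (ha : a ≠ 0) {q : F → ℝ} (hq : ∀ t, 0 < q t) (x : Fin N → F) :
    Lmap (spci a q) x = (Fintype.card F : ℝ) ^ (N - 1) * Lmap q (adot a x) := by
  classical
  have hm : (0:ℝ) < (Fintype.card F : ℝ) := by exact_mod_cast Fintype.card_pos
  have hc : (0:ℝ) < ((Fintype.card F : ℝ) ^ (N - 1))⁻¹ := by positivity
  have hpos : ∀ y : Fin N → F, 0 < spci a q y := fun y => mul_pos hc (hq _)
  obtain ⟨k, -⟩ := Function.ne_iff.1 ha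
  have hN : N - 1 + 1 = N := Nat.succ_pred_eq_of_pos k.pos
  rw [Lmap_apply hpos, Lmap_apply hq, card_funF]
  have hlog : ∀ y : Fin N → F,
      Real.log (spci a q y) = Real.log ((Fintype.card F : ℝ) ^ (N - 1))⁻¹
        + Real.log (q (adot a y)) := fun y =>
    Real.log_mul hc.ne' (hq _).ne'
  simp only [hlog, Finset.sum_add_distrib, Finset.sum_const, Finset.card_univ, card_funF,
    nsmul_eq_mul]
  rw [sum_comp_adot ha (fun t => Real.log (q t))]
  have hpow : ((Fintype.card F : ℝ)) ^ N = (Fintype.card F : ℝ) ^ (N - 1) * Fintype.card F := by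
    rw [← pow_succ, hN]
  push_cast
  rw [hpow]
  ring

lemma sum_spci_w {a : Fin N → F} (ha : a ≠ 0) {w : F → ℝ} (hw : ∑ t, w t = 0) :
    ∑ x : Fin N → F, w (adot a x) = 0 := by
  rw [sum_comp_adot ha, hw, mul_zero]

end spci
section counting
variable {F : Type*} [Field F] [Fintype F] [DecidableEq F] {N M : ℕ}

lemma Mmul (hM : M = (Fintype.card F ^ N - 1) / (Fintype.card F - 1)) :
    M * (Fintype.card F - 1) = Fintype.card F ^ N - 1 := by
  have hdvd : (Fintype.card F - 1) ∣ (Fintype.card F ^ N - 1) := by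
    simpa using Nat.sub_dvd_pow_sub_pow (Fintype.card F) 1 N
  rw [hM, Nat.div_mul_cancel hdvd]

variable (a : Fin M → Fin N → F)

/-- every nonzero vector is a nonzero multiple of some `a i`. -/
lemma cover (h0 : ∀ i, a i ≠ 0)
    (hind : ∀ i j, i ≠ j → ∀ α : F, a i ≠ α • a j) (hM : M = (Fintype.card F ^ N - 1) / (Fintype.card F - 1))
    {v : Fin N → F} (hv : v ≠ 0) :
    ∃ i : Fin M, ∃ α : F, α ≠ 0 ∧ v = α • a i := by
  classical
  set s : Finset (Fin M × F) := univ ×ˢ (univ.filter fun α : F => α ≠ 0) with hs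
  set t : Finset (Fin N → F) := univ.filter fun w => w ≠ 0 with ht
  have hmaps : ∀ p ∈ s, (p.2 • a p.1) ∈ t := by
    rintro ⟨i, α⟩ hp
    simp only [hs, Finset.mem_product, Finset.mem_filter, Finset.mem_univ, true_and] at hp
    simp only [ht, Finset.mem_filter, Finset.mem_univ, true_and]
    intro h
    exact h0 i (by simpa [smul_smul, inv_mul_cancel₀ hp] using congrArg (fun w => α⁻¹ • w) h)
  have hinj : ∀ p p' : Fin M × F, p ∈ s → p' ∈ s → (p.2 • a p.1) = (p'.2 • a p'.1) → p = p' := by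
    rintro ⟨i, α⟩ ⟨j, β⟩ hp hq h
    simp only [hs, Finset.mem_product, Finset.mem_filter, Finset.mem_univ, true_and] at hp hq
    have hij : i = j := by
      by_contra hne
      exact hind i j hne (α⁻¹ * β)
        (by rw [mul_smul, ← h, smul_smul, inv_mul_cancel₀ hp, one_smul])
    subst hij
    have : (α - β) • a i = 0 := by rw [sub_smul, h, sub_self]
    rcases smul_eq_zero.1 this with h' | h'
    · exact Prod.ext rfl (by simpa [sub_eq_zero] using h')
    · exact absurd h' (h0 i)
  have hcards : t.card ≤ s.card := by
    have h1 : s.card = M * (Fintype.card F - 1) := by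
      rw [hs, Finset.card_product, Finset.card_univ, Fintype.card_fin, Finset.filter_ne',
        Finset.card_erase_of_mem (Finset.mem_univ _), Finset.card_univ]
    have h2 : t.card = Fintype.card F ^ N - 1 := by
      rw [ht, Finset.filter_ne', Finset.card_erase_of_mem (Finset.mem_univ _),
        Finset.card_univ, card_funF]
    rw [h1, h2, Mmul hM]
  have hsurj := Finset.surj_on_of_inj_on_of_card_le (s := s) (t := t)
    (fun p _ => p.2 • a p.1) hmaps hinj hcards
  have hvt : v ∈ t := by simp [ht, hv]
  obtain ⟨⟨i, α⟩, hp, hvar⟩ := hsurj v hvt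
  simp only [hs, Finset.mem_product, Finset.mem_filter, Finset.mem_univ, true_and] at hp
  exact ⟨i, α, hp, hvar⟩

/-- the number of indices `i` with `a i · y = 0`, for `y ≠ 0`. -/
lemma count_ortho (h0 : ∀ i, a i ≠ 0)
    (hind : ∀ i j, i ≠ j → ∀ α : F, a i ≠ α • a j) (hM : M = (Fintype.card F ^ N - 1) / (Fintype.card F - 1))
    {y : Fin N → F} (hy : y ≠ 0) :
    ((univ.filter fun i : Fin M => adot (a i) y = 0).card) * (Fintype.card F - 1)
      = Fintype.card F ^ (N - 1) - 1 := by
  classical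
  -- target finset: nonzero vectors orthogonal to y
  set T : Finset (Fin N → F) := univ.filter fun v => adot v y = 0 ∧ v ≠ 0 with hT
  have hTcard : T.card = Fintype.card F ^ (N - 1) - 1 := by
    have h1 : T = (univ.filter fun v => adot v y = 0).erase 0 := by
      ext v
      simp only [hT, Finset.mem_filter, Finset.mem_univ, true_and, Finset.mem_erase]
      tauto
    have h0mem : (0 : Fin N → F) ∈ univ.filter fun v => adot v y = 0 := by
      simp [adot_zero_left]
    have h2 : (univ.filter fun v : Fin N → F => adot v y = 0).card
        = Fintype.card F ^ (N - 1) := by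
      have h := fiber_card_mul (adotR y) (adotR_surj hy) 0
      simp only [adotR, AddMonoidHom.coe_mk, ZeroHom.coe_mk] at h
      rw [card_funF] at h
      obtain ⟨k, -⟩ := Function.ne_iff.1 hy
      have hN : N - 1 + 1 = N := Nat.succ_pred_eq_of_pos k.pos
      have : Fintype.card F ^ N = Fintype.card F ^ (N - 1) * Fintype.card F := by
        rw [← pow_succ, hN]
      rw [this] at h
      exact Nat.eq_of_mul_eq_mul_right Fintype.card_pos h
    rw [h1, Finset.card_erase_of_mem h0mem, h2]
  -- bijection between (filter i) × (F \ {0}) and T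
  rw [← hTcard]
  have : ((univ.filter fun i : Fin M => adot (a i) y = 0) ×ˢ
      (univ.filter fun α : F => α ≠ 0)).card
      = ((univ.filter fun i : Fin M => adot (a i) y = 0).card) * (Fintype.card F - 1) := by
    rw [Finset.card_product, Finset.filter_ne', Finset.card_erase_of_mem (Finset.mem_univ _),
      Finset.card_univ]
  rw [← this]
  apply Finset.card_bij (fun p _ => p.2 • a p.1)
  · rintro ⟨i, α⟩ hp
    simp only [Finset.mem_product, Finset.mem_filter, Finset.mem_univ, true_and] at hp
    obtain ⟨hi, hα⟩ := hp
    simp only [hT, Finset.mem_filter, Finset.mem_univ, true_and]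
    constructor
    · rw [show adot (α • a i) y = α * adot (a i) y from adot_smul_left _ _ _, hi, mul_zero]
    · intro h
      exact h0 i (by simpa [smul_smul, inv_mul_cancel₀ hα] using congrArg (fun w => α⁻¹ • w) h)
  · rintro ⟨i, α⟩ hp ⟨j, β⟩ hq h
    simp only [Finset.mem_product, Finset.mem_filter, Finset.mem_univ, true_and] at hp hq
    have hij : i = j := by
      by_contra hne
      exact hind i j hne (α⁻¹ * β)
        (by rw [mul_smul, ← h, smul_smul, inv_mul_cancel₀ hp.2, one_smul])
    subst hij
    have : (α - β) • a i = 0 := by rw [sub_smul, h, sub_self]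
    rcases smul_eq_zero.1 this with h' | h'
    · exact Prod.ext rfl (by simpa [sub_eq_zero] using h')
    · exact absurd h' (h0 i)
  · intro v hv
    simp only [hT, Finset.mem_filter, Finset.mem_univ, true_and] at hv
    obtain ⟨hvo, hv0⟩ := hv
    obtain ⟨i, α, hα, hvi⟩ := cover a h0 hind hM hv0
    refine ⟨⟨i, α⟩, ?_, hvi.symm⟩
    simp only [Finset.mem_product, Finset.mem_filter, Finset.mem_univ, true_and]
    refine ⟨?_, hα⟩
    have := hvo
    rw [hvi, adot_smul_left] at this
    exact (mul_eq_zero.1 this).resolve_left hα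

end counting
section linalg

lemma sumLM_apply {A : Type*} [Fintype A] (v : A → ℝ) : sumLM A v = ∑ i, v i := rfl

lemma finrank_ker_sumLM (A : Type*) [Fintype A] [Nonempty A] :
    Module.finrank ℝ (LinearMap.ker (sumLM A)) = Fintype.card A - 1 := by
  have hn0 : (0:ℝ) < (Fintype.card A : ℝ) := by exact_mod_cast Fintype.card_pos
  have hsurj : LinearMap.range (sumLM A) = ⊤ := by
    rw [LinearMap.range_eq_top]
    intro r
    refine ⟨fun _ => r / (Fintype.card A : ℝ), ?_⟩
    rw [sumLM_apply, Finset.sum_const, Finset.card_univ, nsmul_eq_mul]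
    field_simp
  have h := LinearMap.finrank_range_add_finrank_ker (sumLM A)
  rw [hsurj, finrank_top, Module.finrank_self, Module.finrank_pi] at h
  have hc : 1 ≤ Fintype.card A := Fintype.card_pos
  omega

variable {F : Type*} [Field F] [Fintype F] {N : ℕ}

/-- composition with `adot a` as a linear map on function spaces. -/
def compLM (a : Fin N → F) : (F → ℝ) →ₗ[ℝ] ((Fin N → F) → ℝ) where
  toFun w := fun x => w (adot a x)
  map_add' := by intros; rfl
  map_smul' := by intros; rfl

@[simp] lemma compLM_apply (a : Fin N → F) (w : F → ℝ) (x : Fin N → F) :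
    compLM a w x = w (adot a x) := rfl

lemma compLM_inj {a : Fin N → F} (ha : a ≠ 0) : Function.Injective (compLM a) := by
  intro w w' h
  funext t
  obtain ⟨x, hx⟩ := adotL_surj ha t
  simp only [adotL, AddMonoidHom.coe_mk, ZeroHom.coe_mk] at hx
  have := congrFun h x
  simpa [hx] using this

end linalg

end

/-- Given representatives `a_1, …, a_M` of the `M = (m^N-1)/(m-1)`
one-dimensional subspaces of `F^N`, the PMF space `V_{F^N}` is the orthogonal
direct sum of the SPCI subspaces `V_{F^N}^{a_i}` (realized via the linear
isometry `L`, under which `V_{F^N}` corresponds to the zero-sum hyperplane and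
the inner product to the Euclidean one): the subspaces are pairwise orthogonal,
their supremum is all of (the image of) `V_{F^N}`, each has dimension `m - 1`,
and their dimensions sum to `m^N - 1`. -/
theorem stmt_15 {F : Type*} [Field F] [Fintype F] {N M : ℕ}
    (hM : M = (Fintype.card F ^ N - 1) / (Fintype.card F - 1))
    (a : Fin M → Fin N → F) (h0 : ∀ i, a i ≠ 0)
    (hind : ∀ i j, i ≠ j → ∀ α : F, a i ≠ α • a j) :
    ∃ W : Fin M → Submodule ℝ ((Fin N → F) → ℝ),
      (∀ i, (W i : Set ((Fin N → F) → ℝ)) =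
        {v | ∃ q : F → ℝ, IsPPMF q ∧ v = Lmap (spci (a i) q)}) ∧
      (∀ i j, i ≠ j → ∀ v ∈ W i, ∀ w ∈ W j, ∑ x, v x * w x = 0) ∧
      (⨆ i, W i) = LinearMap.ker (sumLM (Fin N → F)) ∧
      (∀ i, Module.finrank ℝ (W i) = Fintype.card F - 1) ∧
      ∑ i, Module.finrank ℝ (W i) = Fintype.card F ^ N - 1 := by
  classical
  have hm1 : 1 < Fintype.card F := Fintype.one_lt_card
  have hm0 : (0:ℝ) < (Fintype.card F : ℝ) := by exact_mod_cast Nat.lt_of_lt_of_le Nat.zero_lt_one hm1.le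
  have hmne : (Fintype.card F : ℝ) ≠ 0 := hm0.ne'
  have hpne : ((Fintype.card F : ℝ) ^ (N - 1)) ≠ 0 := pow_ne_zero _ hmne
  set W : Fin M → Submodule ℝ ((Fin N → F) → ℝ) :=
    fun i => (LinearMap.ker (sumLM F)).map (compLM (a i)) with hWdef
  have hr : ∀ i, Module.finrank ℝ (W i) = Fintype.card F - 1 := by
    intro i
    rw [hWdef, ← LinearEquiv.finrank_eq
      (Submodule.equivMapOfInjective (compLM (a i)) (compLM_inj (h0 i)) (LinearMap.ker (sumLM F)))]
    exact finrank_ker_sumLM F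
  refine ⟨W, ?_, ?_, ?_, hr, ?_⟩
  · -- carrier
    intro i
    ext v
    simp only [SetLike.mem_coe, hWdef, Submodule.mem_map, LinearMap.mem_ker, Set.mem_setOf_eq]
    constructor
    · rintro ⟨w, hw, rfl⟩
      rw [sumLM_apply] at hw
      have hw' : ∑ t, (((Fintype.card F : ℝ) ^ (N - 1))⁻¹ • w) t = 0 := by
        simp only [Pi.smul_apply, smul_eq_mul, ← Finset.mul_sum, hw, mul_zero]
      obtain ⟨q, hq, hLq⟩ := exists_ppmf _ hw'
      refine ⟨q, hq, ?_⟩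
      funext x
      rw [Lmap_spci (h0 i) hq.1 x, hLq]
      simp only [compLM_apply, Pi.smul_apply, smul_eq_mul]
      field_simp
    · rintro ⟨q, hq, rfl⟩
      refine ⟨((Fintype.card F : ℝ) ^ (N - 1)) • Lmap q, ?_, ?_⟩
      · rw [sumLM_apply]
        simp only [Pi.smul_apply, smul_eq_mul, ← Finset.mul_sum, sum_Lmap hq.1, mul_zero]
      · funext x
        rw [Lmap_spci (h0 i) hq.1 x]
        simp only [compLM_apply, Pi.smul_apply, smul_eq_mul]
  · -- orthogonality
    rintro i j hij v hv w hw
    rw [hWdef, Submodule.mem_map] at hv hw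
    obtain ⟨wv, hwv, rfl⟩ := hv
    obtain ⟨ww, hww, rfl⟩ := hw
    rw [LinearMap.mem_ker, sumLM_apply] at hwv hww
    have hsurj := adotP_surj (h0 i) (h0 j) (hind i j hij) (hind j i hij.symm)
    have h := sum_comp_fiber (adotP (a i) (a j)) hsurj (fun p => wv p.1 * ww p.2)
    simp only [adotP, AddMonoidHom.coe_mk, ZeroHom.coe_mk] at h
    simp only [compLM_apply]
    rw [h, Fintype.sum_prod_type]
    simp [← Finset.mul_sum, hww]
  · -- supremum
    apply le_antisymm
    · apply iSup_le
      intro i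
      rintro v hv
      rw [hWdef, Submodule.mem_map] at hv
      obtain ⟨w, hw, rfl⟩ := hv
      rw [LinearMap.mem_ker, sumLM_apply] at hw ⊢
      simp only [compLM_apply]
      exact sum_spci_w (h0 i) hw
    · intro v hv
      rw [LinearMap.mem_ker, sumLM_apply] at hv
      rcases Nat.eq_zero_or_pos N with hN | hN
      · subst hN
        have hv0 : v = 0 := by
          funext x
          have hx : x = default := Subsingleton.elim _ _
          rw [Fintype.sum_unique] at hv
          rw [hx, hv]
          rfl
        rw [hv0]
        exact Submodule.zero_mem _
      · have key : ∀ z : Fin N → F,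
            (fun x => (if x = z then (1:ℝ) else 0) - ((Fintype.card F : ℝ) ^ N)⁻¹) ∈ ⨆ i, W i := by
          intro z
          set g : Fin M → (Fin N → F) → ℝ :=
            fun i => compLM (a i) (fun t => (if t = adot (a i) z then (1:ℝ) else 0)
              - (Fintype.card F : ℝ)⁻¹) with hg
          have hmem : ∀ i, g i ∈ W i := by
            intro i
            refine ⟨_, ?_, rfl⟩
            simp only [SetLike.mem_coe, LinearMap.mem_ker, sumLM_apply]
            simp only [Finset.sum_sub_distrib, Finset.sum_ite_eq', Finset.mem_univ, if_true,
              Finset.sum_const, Finset.card_univ, nsmul_eq_mul]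
            field_simp
            norm_num
          have hsum : ((Fintype.card F : ℝ) ^ (N - 1))⁻¹ • (∑ i, g i) ∈ ⨆ i, W i :=
            Submodule.smul_mem _ _ (Submodule.sum_mem _ fun i _ =>
              Submodule.mem_iSup_of_mem i (hmem i))
          have heq : (fun x => (if x = z then (1:ℝ) else 0) - ((Fintype.card F : ℝ) ^ N)⁻¹)
              = ((Fintype.card F : ℝ) ^ (N - 1))⁻¹ • (∑ i, g i) := by
            funext x
            simp only [Pi.smul_apply, smul_eq_mul, Finset.sum_apply, hg, compLM_apply]
            have hMR : (M:ℝ) * ((Fintype.card F : ℝ) - 1) = (Fintype.card F : ℝ) ^ N - 1 := by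
              have h2 := Mmul (F := F) (N := N) hM
              have h1 : (1:ℕ) ≤ Fintype.card F ^ N := Nat.one_le_pow _ _ (by omega)
              rify [hm1.le, h1] at h2
              exact h2
            have hpow : ((Fintype.card F : ℝ)) ^ N
                = (Fintype.card F : ℝ) ^ (N - 1) * (Fintype.card F : ℝ) := by
              rw [← pow_succ]
              congr 1
              omega
            rw [hpow] at hMR
            by_cases hxz : x = z
            · subst hxz
              simp only [if_pos rfl, Finset.sum_const, Finset.card_univ, Fintype.card_fin,
                nsmul_eq_mul]
              rw [hpow]
              have hc : ((Fintype.card F:ℝ)^(N-1) * (Fintype.card F:ℝ)) ≠ 0 :=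
                mul_ne_zero hpne hmne
              apply mul_left_cancel₀ hc
              field_simp
              simp only [if_true, mul_one]
              linear_combination (-1 : ℝ) * hMR
            · rw [if_neg hxz]
              have hysub : x - z ≠ 0 := sub_ne_zero.2 hxz
              set K : ℕ := (Finset.univ.filter fun i : Fin M => adot (a i) (x - z) = 0).card
                with hK
              have hKcount : K * (Fintype.card F - 1) = Fintype.card F ^ (N - 1) - 1 :=
                count_ortho a h0 hind hM hysub
              -- rewrite the sum using K
              have hsum2 : ∑ i, ((if adot (a i) x = adot (a i) z then (1:ℝ) else 0)
                  - (Fintype.card F : ℝ)⁻¹)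
                  = (K:ℝ) - (M:ℝ) * (Fintype.card F : ℝ)⁻¹ := by
                rw [Finset.sum_sub_distrib, Finset.sum_const, Finset.card_univ,
                  Fintype.card_fin, nsmul_eq_mul]
                congr 1
                rw [Finset.sum_boole, hK]
                norm_cast
                apply congrArg
                apply Finset.filter_congr
                intro i _
                rw [adot_sub_right, sub_eq_zero]
              rw [hsum2]
              -- now pure arithmetic
              have hMK : M = Fintype.card F * K + 1 := by
                have h1 := Mmul (F := F) (N := N) hM
                have hpowN : Fintype.card F ^ N = Fintype.card F * Fintype.card F ^ (N - 1) := by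
                  rw [← pow_succ']
                  congr 1
                  omega
                have hP1 : 1 ≤ Fintype.card F ^ (N-1) := Nat.one_le_pow _ _ (by omega)
                have hN1 : 1 ≤ Fintype.card F ^ N := Nat.one_le_pow _ _ (by omega)
                have e1 : M * (Fintype.card F - 1) + 1 = Fintype.card F ^ N := by omega
                have e2 : K * (Fintype.card F - 1) + 1 = Fintype.card F ^ (N-1) := by omega
                have e3 : M * (Fintype.card F - 1) + 1
                    = (Fintype.card F * K + 1) * (Fintype.card F - 1) + 1 := by
                  rw [e1, hpowN, ← e2]
                  obtain ⟨d, hd⟩ := Nat.exists_eq_add_of_le hm1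
                  rw [hd]
                  have h21 : Nat.succ 1 + d - 1 = 1 + d := by omega
                  rw [h21]
                  ring
                have e4 := Nat.add_right_cancel e3
                exact Nat.eq_of_mul_eq_mul_right (by omega) e4
              have hMKR : (M:ℝ) = (Fintype.card F : ℝ) * K + 1 := by exact_mod_cast hMK
              rw [hMKR, hpow]
              field_simp
              ring
          rw [heq]
          exact hsum
        have hdecomp : v = ∑ z, v z • (fun x => (if x = z then (1:ℝ) else 0)
            - ((Fintype.card F : ℝ) ^ N)⁻¹) := by
          funext x
          simp only [Finset.sum_apply, Pi.smul_apply, smul_eq_mul, mul_sub]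
          rw [Finset.sum_sub_distrib]
          have h1 : ∑ z, v z * (if x = z then (1:ℝ) else 0) = v x := by
            simp [mul_ite]
          rw [h1, ← Finset.sum_mul, hv, zero_mul, sub_zero]
        rw [hdecomp]
        exact Submodule.sum_mem _ fun z _ => Submodule.smul_mem _ _ (key z)
  · -- dimension sum
    rw [Finset.sum_congr rfl fun i _ => hr i, Finset.sum_const, Finset.card_univ,
      Fintype.card_fin, smul_eq_mul, Mmul hM]
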